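/- Let 0 < s < 1, τ > (s−σ)/(1−s) with 0 < σ < s, and let B ⊂ B(0,2) be a δ-separated set with |B| ~ δ^{-1} satisfying |B ∩ B(x,r)| ≤ C·r/δ for r ≥ δ. Suppose that for every b ∈ B, a set G(b) ⊂ B satisfies |G(b)| ≤ δ^{τ−1}. Then Σ_{b ∈ B} Σ_{b' ∈ G(b), b' ≠ b} |b − b'|^{-s} ≤ C'·δ^{−2 + τ(1−s)}·log(1/δ). -/

import Mathlib

noncomputable section

/-- Euclidean distance in the plane (modeled as `ℝ × ℝ`). -/
def ed (p q : ℝ × ℝ) : ℝ := Real.sqrt ((p.1 - q.1)^2 + (p.2 - q.2)^2)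

lemma ed_nonneg (p q : ℝ × ℝ) : 0 ≤ ed p q := Real.sqrt_nonneg _

lemma ed_comm (p q : ℝ × ℝ) : ed p q = ed q p := by unfold ed; ring_nf

def toE (p : ℝ × ℝ) : EuclideanSpace ℝ (Fin 2) := WithLp.toLp 2 ![p.1, p.2]

lemma ed_eq_dist (p q : ℝ × ℝ) : ed p q = dist (toE p) (toE q) := by
  rw [EuclideanSpace.dist_eq]
  simp [ed, toE, Fin.sum_univ_two, Real.dist_eq, sq_abs]

lemma ed_triangle (p q r : ℝ × ℝ) : ed p r ≤ ed p q + ed q r := by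
  rw [ed_eq_dist, ed_eq_dist, ed_eq_dist]; exact dist_triangle _ _ _


/-- Upper bound in the fan-finding argument: if `B ⊂ B(0,2)` is δ-separated with
`|B| ∼ δ⁻¹` and `(δ,1)`-non-concentration `|B ∩ B(x,r)| ≤ C·r/δ`, and `G(b) ⊂ B`
has `|G(b)| ≤ δ^{τ-1}` for every `b ∈ B` (where `0 < σ < s < 1` and
`τ > (s-σ)/(1-s)`), then
`Σ_{b ∈ B} Σ_{b' ∈ G(b), b' ≠ b} |b - b'|^{-s} ≤ C'·δ^{-2+τ(1-s)}·log(1/δ)`. -/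
theorem stmt18 (C : ℝ) (hC : 0 < C) :
    ∃ C' : ℝ, 0 < C' ∧
      ∀ (δ s σ τ : ℝ) (B : Finset (ℝ × ℝ)) (G : (ℝ × ℝ) → Finset (ℝ × ℝ)),
        0 < δ → δ ≤ 1/2 → 0 < σ → σ < s → s < 1 → (s - σ)/(1 - s) < τ →
        (∀ b ∈ B, ed b 0 ≤ 2) →
        (∀ b ∈ B, ∀ b' ∈ B, b ≠ b' → δ ≤ ed b b') →
        (∀ (x : ℝ × ℝ) (r : ℝ), δ ≤ r →
          ((B.filter (fun p => ed p x ≤ r)).card : ℝ) ≤ C * r / δ) →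
        (B.card : ℝ) ≤ C / δ → C⁻¹ / δ ≤ (B.card : ℝ) →
        (∀ b ∈ B, G b ⊆ B ∧ ((G b).card : ℝ) ≤ δ ^ (τ - 1)) →
        (∑ b ∈ B, ∑ b' ∈ (G b).erase b, (ed b b') ^ (-s))
          ≤ C' * δ ^ (-2 + τ * (1 - s)) * Real.log (1/δ) := by
  refine ⟨8 * (1 + C)^2 / Real.log 2, by positivity, ?_⟩
  intro δ s σ τ B G hδ hδ2 hσ hσs hs1 hτ hball hsep hcount hcard1 hcard2 hG
  have hs0 : 0 < s := hσ.trans hσs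
  have hδ1 : δ < 1 := lt_of_le_of_lt hδ2 (by norm_num)
  set N : ℕ := Nat.log 2 ⌊(4:ℝ)/δ⌋₊ + 1 with hN
  set E : ℝ := δ ^ (τ * (1 - s) - 1) with hE
  have hEpos : 0 < E := Real.rpow_pos_of_pos hδ _
  -- inner estimate
  have key : ∀ b ∈ B, ∑ b' ∈ (G b).erase b, (ed b b') ^ (-s)
      ≤ (N : ℝ) * (2 * (1 + C) * E) := by
    intro b hb
    set g : ℝ × ℝ → ℕ := fun b' => Nat.log 2 ⌊ed b b' / δ⌋₊ with hg
    have hmem : ∀ b' ∈ (G b).erase b, b' ∈ B ∧ δ ≤ ed b b' ∧ ed b b' ≤ 4 := by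
      intro b' hb'
      have hne : b' ≠ b := Finset.ne_of_mem_erase hb'
      have hb'B : b' ∈ B := (hG b hb).1 (Finset.mem_of_mem_erase hb')
      refine ⟨hb'B, hsep b hb b' hb'B (Ne.symm hne), ?_⟩
      have := ed_triangle b 0 b'
      have h1 := hball b hb
      have h2 := hball b' hb'B
      rw [ed_comm 0 b'] at this
      linarith
    have hmaps : ∀ b' ∈ (G b).erase b, g b' ∈ Finset.range N := by
      intro b' hb'
      obtain ⟨hb'B, hlow, hup⟩ := hmem b' hb'
      have h1 : ⌊ed b b' / δ⌋₊ ≤ ⌊(4:ℝ)/δ⌋₊ := Nat.floor_le_floor (by gcongr)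
      simp only [Finset.mem_range, hN, hg]
      exact Nat.lt_succ_of_le (Nat.log_mono_right h1)
    rw [← Finset.sum_fiberwise_of_maps_to hmaps]
    have hfiber : ∀ j ∈ Finset.range N,
        ∑ b' ∈ (G b).erase b |>.filter (fun b' => g b' = j), (ed b b') ^ (-s)
          ≤ 2 * (1 + C) * E := by
      intro j _
      set S := (G b).erase b |>.filter (fun b' => g b' = j) with hS
      set a : ℝ := 2 ^ j with ha
      have ha0 : (0:ℝ) < a := by positivity
      -- facts for members of S
      have hSfact : ∀ b' ∈ S, a * δ ≤ ed b b' ∧ ed b b' ≤ 2 * a * δ := by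
        intro b' hb'
        obtain ⟨hb'e, hgj⟩ := Finset.mem_filter.mp hb'
        obtain ⟨hb'B, hlow, hup⟩ := hmem b' hb'e
        set n := ⌊ed b b' / δ⌋₊ with hn
        have hj : Nat.log 2 n = j := hgj
        have hed0 : 0 < ed b b' := lt_of_lt_of_le hδ hlow
        have hn1 : 1 ≤ n := Nat.le_floor (by
          rw [Nat.cast_one, le_div_iff₀ hδ]; linarith)
        have hl : (2:ℝ) ^ Nat.log 2 n ≤ (n:ℝ) := by
          exact_mod_cast Nat.pow_log_le_self 2 (by omega)
        rw [hj] at hl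
        have hfl : (n:ℝ) ≤ ed b b' / δ := Nat.floor_le (by positivity)
        have hfu : ed b b' / δ < (n:ℝ) + 1 := Nat.lt_floor_add_one _
        have hu : (n:ℝ) + 1 ≤ 2 * 2 ^ Nat.log 2 n := by
          have h2 := Nat.lt_pow_succ_log_self (by norm_num : 1 < 2) n
          calc (n:ℝ) + 1 ≤ ((2:ℕ) ^ (Nat.log 2 n + 1) : ℕ) := by exact_mod_cast h2
            _ = 2 * 2 ^ (Nat.log 2 n) := by push_cast [pow_succ]; ring
        rw [hj] at hu
        constructor
        · rw [ha, ← le_div_iff₀ hδ]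
          exact le_trans hl hfl
        · have h3 : ed b b' / δ ≤ 2 * a := by
            rw [ha]
            calc ed b b' / δ ≤ (n:ℝ) + 1 := le_of_lt hfu
              _ ≤ 2 * 2 ^ j := hu
          calc ed b b' = (ed b b' / δ) * δ := by field_simp
            _ ≤ (2 * a) * δ := by nlinarith
      -- term bound
      have hterm : ∀ b' ∈ S, (ed b b') ^ (-s) ≤ (a * δ) ^ (-s) := by
        intro b' hb'
        exact Real.rpow_le_rpow_of_nonpos (by positivity) (hSfact b' hb').1 (by linarith)
      have hsum : ∑ b' ∈ S, (ed b b') ^ (-s) ≤ (S.card : ℝ) * (a * δ) ^ (-s) := by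
        calc ∑ b' ∈ S, (ed b b') ^ (-s) ≤ ∑ _b' ∈ S, (a * δ) ^ (-s) :=
              Finset.sum_le_sum hterm
          _ = (S.card : ℝ) * (a * δ) ^ (-s) := by rw [Finset.sum_const, nsmul_eq_mul]
      rcases Finset.eq_empty_or_nonempty S with hSe | hSne
      · rw [hSe]; simp; positivity
      have hm0 : (0:ℝ) < S.card := by exact_mod_cast Finset.card_pos.mpr hSne
      have hma : (S.card : ℝ) ≤ δ ^ (τ - 1) := by
        refine le_trans ?_ (hG b hb).2
        exact_mod_cast Finset.card_le_card ((Finset.filter_subset _ _).trans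
          (Finset.erase_subset _ _))
      have hmb : (S.card : ℝ) ≤ C * (2 * a) := by
        have hsub : S ⊆ B.filter (fun p => ed p b ≤ 2 * a * δ) := by
          intro b' hb'
          have hb'e := (Finset.mem_filter.mp hb').1
          refine Finset.mem_filter.mpr ⟨(hmem b' hb'e).1, ?_⟩
          rw [ed_comm]; exact (hSfact b' hb').2
        have ha1 : (1:ℝ) ≤ a := by rw [ha]; exact one_le_pow₀ (by norm_num)
        have hr : δ ≤ 2 * a * δ := by nlinarith
        have h4 := hcount b (2 * a * δ) hr
        have hcard := Finset.card_le_card hsub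
        calc (S.card : ℝ) ≤ ((B.filter (fun p => ed p b ≤ 2 * a * δ)).card : ℝ) := by
              exact_mod_cast hcard
          _ ≤ C * (2 * a * δ) / δ := h4
          _ = C * (2 * a) := by field_simp
      -- interpolation
      have hinterp : (S.card : ℝ) ≤ (C * (2 * a)) ^ s * (δ ^ (τ - 1)) ^ (1 - s) := by
        have h1 : (S.card : ℝ) = (S.card : ℝ) ^ s * (S.card : ℝ) ^ (1 - s) := by
          rw [← Real.rpow_add hm0]; norm_num
        rw [h1]
        have h2 : (S.card : ℝ) ^ s ≤ (C * (2 * a)) ^ s :=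
          Real.rpow_le_rpow hm0.le hmb hs0.le
        have h3 : (S.card : ℝ) ^ (1 - s) ≤ (δ ^ (τ - 1)) ^ (1 - s) :=
          Real.rpow_le_rpow hm0.le hma (by linarith)
        exact mul_le_mul h2 h3 (Real.rpow_nonneg hm0.le _) (by positivity)
      -- algebra
      have halg : (C * (2 * a)) ^ s * (δ ^ (τ - 1)) ^ (1 - s) * (a * δ) ^ (-s)
          ≤ 2 * (1 + C) * E := by
        have e1 : (C * (2 * a)) ^ s = (C * 2) ^ s * a ^ s := by
          rw [show C * (2 * a) = (C * 2) * a by ring,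
            Real.mul_rpow (by positivity) ha0.le]
        have e2 : ((a : ℝ) * δ) ^ (-s) = a ^ (-s) * δ ^ (-s) :=
          Real.mul_rpow ha0.le hδ.le
        have e3 : (a:ℝ) ^ s * a ^ (-s) = 1 := by
          rw [← Real.rpow_add ha0]; norm_num
        have e4 : ((δ : ℝ) ^ (τ - 1)) ^ (1 - s) * δ ^ (-s) = E := by
          rw [← Real.rpow_mul hδ.le, ← Real.rpow_add hδ, hE]
          congr 1; ring
        have h5 : (C * 2) ^ s ≤ 2 * (1 + C) := by
          rcases le_total (C * 2) 1 with h | h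
          · exact le_trans (Real.rpow_le_one (by positivity) h hs0.le) (by nlinarith)
          · calc (C * 2) ^ s ≤ (C * 2) ^ (1:ℝ) :=
                Real.rpow_le_rpow_of_exponent_le h hs1.le
              _ = C * 2 := Real.rpow_one _
              _ ≤ 2 * (1 + C) := by nlinarith
        calc (C * (2 * a)) ^ s * (δ ^ (τ - 1)) ^ (1 - s) * (a * δ) ^ (-s)
            = ((C * 2) ^ s * a ^ s) * (δ ^ (τ - 1)) ^ (1 - s) * (a ^ (-s) * δ ^ (-s)) := by
              rw [e1, e2]
          _ = (C * 2) ^ s * (a ^ s * a ^ (-s)) * ((δ ^ (τ - 1)) ^ (1 - s) * δ ^ (-s)) := by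
              ring
          _ = (C * 2) ^ s * E := by rw [e3, e4]; ring
          _ ≤ 2 * (1 + C) * E := mul_le_mul_of_nonneg_right h5 hEpos.le
      calc ∑ b' ∈ S, (ed b b') ^ (-s) ≤ (S.card : ℝ) * (a * δ) ^ (-s) := hsum
        _ ≤ (C * (2 * a)) ^ s * (δ ^ (τ - 1)) ^ (1 - s) * (a * δ) ^ (-s) :=
            mul_le_mul_of_nonneg_right hinterp (by positivity)
        _ ≤ 2 * (1 + C) * E := halg
    calc ∑ j ∈ Finset.range N, ∑ b' ∈ (G b).erase b |>.filter (fun b' => g b' = j),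
          (ed b b') ^ (-s)
        ≤ ∑ _j ∈ Finset.range N, 2 * (1 + C) * E := Finset.sum_le_sum hfiber
      _ = (N : ℝ) * (2 * (1 + C) * E) := by
          rw [Finset.sum_const, Finset.card_range, nsmul_eq_mul]
  -- sum over b
  have total : ∑ b ∈ B, ∑ b' ∈ (G b).erase b, (ed b b') ^ (-s)
      ≤ (C / δ) * ((N : ℝ) * (2 * (1 + C) * E)) := by
    calc ∑ b ∈ B, ∑ b' ∈ (G b).erase b, (ed b b') ^ (-s)
        ≤ ∑ _b ∈ B, (N : ℝ) * (2 * (1 + C) * E) := Finset.sum_le_sum key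
      _ = (B.card : ℝ) * ((N : ℝ) * (2 * (1 + C) * E)) := by
          rw [Finset.sum_const, nsmul_eq_mul]
      _ ≤ (C / δ) * ((N : ℝ) * (2 * (1 + C) * E)) :=
          mul_le_mul_of_nonneg_right hcard1 (by positivity)
  -- N bound
  have hlog2 : (0:ℝ) < Real.log 2 := Real.log_pos (by norm_num)
  have hlogδ : Real.log 2 ≤ Real.log (1/δ) := by
    apply Real.log_le_log (by norm_num)
    rw [le_div_iff₀ hδ]; linarith
  have hlogδ0 : 0 < Real.log (1/δ) := lt_of_lt_of_le hlog2 hlogδ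
  have hNbound : (N : ℝ) ≤ 4 * Real.log (1/δ) / Real.log 2 := by
    set M := ⌊(4:ℝ)/δ⌋₊ with hM
    have hM1 : 1 ≤ M := Nat.le_floor (by
      rw [Nat.cast_one, le_div_iff₀ hδ]; linarith)
    have h2M : (2:ℝ) ^ Nat.log 2 M ≤ 4 / δ := by
      calc (2:ℝ) ^ Nat.log 2 M ≤ (M:ℝ) := by
            exact_mod_cast Nat.pow_log_le_self 2 (by omega)
        _ ≤ 4 / δ := Nat.floor_le (by positivity)
    have hlogM : (Nat.log 2 M : ℝ) * Real.log 2 ≤ 3 * Real.log (1/δ) := by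
      have h6 : Real.log ((2:ℝ) ^ Nat.log 2 M) ≤ Real.log (4/δ) :=
        Real.log_le_log (by positivity) h2M
      rw [Real.log_pow] at h6
      have h7 : Real.log (4/δ) = Real.log 4 + Real.log (1/δ) := by
        rw [show (4:ℝ)/δ = 4 * (1/δ) by ring]
        exact Real.log_mul (by norm_num) (by positivity)
      have h8 : Real.log 4 = 2 * Real.log 2 := by
        rw [show (4:ℝ) = 2^2 by norm_num, Real.log_pow]; push_cast; ring
      have h9 : Real.log 2 ≤ Real.log (1/δ) := hlogδ
      linarith
    have h10 : (Nat.log 2 M : ℝ) ≤ 3 * Real.log (1/δ) / Real.log 2 :=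
      (le_div_iff₀ hlog2).mpr hlogM
    have h11 : (1:ℝ) ≤ Real.log (1/δ) / Real.log 2 :=
      (le_div_iff₀ hlog2).mpr (by linarith)
    have h12 : (N:ℝ) = (Nat.log 2 M : ℝ) + 1 := by rw [hN]; push_cast; ring
    rw [h12, le_div_iff₀ hlog2]
    linarith [hlogM, hlogδ]
  -- combine
  have hEδ : δ ^ (-2 + τ * (1 - s)) = E / δ := by
    rw [hE, show (-2 + τ * (1-s)) = (τ * (1-s) - 1) - 1 by ring,
      Real.rpow_sub_one hδ.ne']
  clear_value N E
  refine le_trans total ?_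
  have hN0 : (0:ℝ) ≤ (N:ℝ) := Nat.cast_nonneg _
  calc (C / δ) * ((N : ℝ) * (2 * (1 + C) * E))
      = (C * (N:ℝ) * (2 * (1 + C))) * (E / δ) := by ring
    _ ≤ ((1 + C) * (4 * Real.log (1/δ) / Real.log 2) * (2 * (1 + C))) * (E / δ) := by
        have hEδ0 : (0:ℝ) ≤ E / δ := div_nonneg hEpos.le hδ.le
        have hCN : C * (N:ℝ) ≤ (1 + C) * (4 * Real.log (1/δ) / Real.log 2) := by
          have h13 : C * (N:ℝ) ≤ (1 + C) * (N:ℝ) :=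
            mul_le_mul_of_nonneg_right (by linarith) hN0
          exact le_trans h13 (mul_le_mul_of_nonneg_left hNbound (by linarith))
        have h14 : (0:ℝ) ≤ 2 * (1 + C) := by linarith
        exact mul_le_mul_of_nonneg_right
          (mul_le_mul_of_nonneg_right hCN h14) hEδ0
    _ = 8 * (1 + C)^2 / Real.log 2 * (E / δ) * Real.log (1/δ) := by
        ring
    _ = 8 * (1 + C)^2 / Real.log 2 * δ ^ (-2 + τ * (1 - s)) * Real.log (1/δ) := by
        rw [hEδ]
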